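/- arXiv:1403.5037 — 4 statements merged into one kernel-verified Lean document; each statement's English description precedes it below -/
import Mathlib

section
/- Let G be a connected Lie group with a left-invariant Riemannian metric. If the Ricci curvature is negative in all directions tangent to the center of the Lie algebra, then the center of the Lie algebra of G is trivial. -/
open scoped RealInnerProductSpace

noncomputable section

variable {L : Type*} [NormedAddCommGroup L] [InnerProductSpace ℝ L] [FiniteDimensional ℝ L]

/-- The Levi-Civita connection of a left-invariant Riemannian metric on a Lie group,
computed at the identity on left-invariant vector fields:
`∇_X Y = ½ (⁅X,Y⁆ − ad(X)ᵗ Y − ad(Y)ᵗ X)`, where `br` is the Lie bracket of the Lie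
algebra `L` and transposes are taken with respect to the inner product on `L` given by
the metric. -/
def leviCivita (br : L →ₗ[ℝ] L →ₗ[ℝ] L) (X Y : L) : L :=
  (2 : ℝ)⁻¹ • (br X Y - LinearMap.adjoint (br X) Y - LinearMap.adjoint (br Y) X)

/-- The curvature tensor `R(X,Y)Z = ∇_X ∇_Y Z − ∇_Y ∇_X Z − ∇_{⁅X,Y⁆} Z` of a
left-invariant metric. -/
def curvature (br : L →ₗ[ℝ] L →ₗ[ℝ] L) (X Y Z : L) : L :=
  leviCivita br X (leviCivita br Y Z) - leviCivita br Y (leviCivita br X Z) -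
    leviCivita br (br X Y) Z

/-- The Ricci tensor `Ric(X,Y) = Σᵢ ⟨R(X,eᵢ)eᵢ, Y⟩` of a left-invariant metric, evaluated
at the identity. -/
def ricci (br : L →ₗ[ℝ] L →ₗ[ℝ] L) (X Y : L) : ℝ :=
  ∑ i, ⟪curvature br X (stdOrthonormalBasis ℝ L i) (stdOrthonormalBasis ℝ L i), Y⟫

/-- Let `G` be a connected Lie group with a left-invariant Riemannian metric; identify its
Lie algebra `L = Lie(G)` (with bracket `br`) with the tangent space at the identity, so
that the metric is an inner product on `L`.  If the Ricci curvature is negative in all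
nonzero directions tangent to the center of the Lie algebra, then the center of the Lie
algebra of `G` is trivial. -/
theorem center_trivial_of_negative_ricci_on_center
    (br : L →ₗ[ℝ] L →ₗ[ℝ] L)
    (hanti : ∀ X Y : L, br X Y = - br Y X)
    (hjacobi : ∀ X Y Z : L, br X (br Y Z) + br Y (br Z X) + br Z (br X Y) = 0)
    (hneg : ∀ X : L, (∀ Y : L, br X Y = 0) → X ≠ 0 → ricci br X X < 0) :
    ∀ X : L, (∀ Y : L, br X Y = 0) → X = 0 := by
  intro X hX
  by_contra hX0
  have hR := hneg X hX hX0
  have hXmap : br X = 0 := LinearMap.ext hX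
  have hbrX : ∀ Z : L, br Z X = 0 := fun Z => by rw [hanti]; simp [hX]
  -- ∇_X Y = -½ ad(Y)ᵗ X
  have hLC : ∀ Y : L, leviCivita br X Y = -((2:ℝ)⁻¹) • LinearMap.adjoint (br Y) X := by
    intro Y
    simp [leviCivita, hXmap]
  -- ∇_X applied, inner with X vanishes
  have hinner1 : ∀ Y : L, ⟪leviCivita br X Y, X⟫ = 0 := by
    intro Y
    rw [hLC, inner_smul_left, LinearMap.adjoint_inner_left, hbrX]
    simp
  have key : ∀ Z : L, ⟪curvature br X Z Z, X⟫
      = 4⁻¹ * ‖LinearMap.adjoint (br Z) X‖^2 := by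
    intro Z
    set W := LinearMap.adjoint (br Z) X with hW
    have h3 : leviCivita br (br X Z) Z = 0 := by
      simp [leviCivita, hX Z]
    have h2 : leviCivita br Z (leviCivita br X Z)
        = -((4:ℝ)⁻¹) • (br Z W - LinearMap.adjoint (br Z) W - LinearMap.adjoint (br W) Z) := by
      rw [hLC Z, ← hW]
      simp only [leviCivita, map_smul, map_neg, LinearMap.neg_apply, LinearMap.smul_apply,
        map_smulₛₗ, RingHom.id_apply, smul_neg, smul_smul]
      module
    rw [curvature, inner_sub_left, inner_sub_left, hinner1, h3, h2]
    have e1 : ⟪br Z W, X⟫ = ‖W‖^2 := by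
      rw [real_inner_comm, ← LinearMap.adjoint_inner_left, ← hW, real_inner_self_eq_norm_sq]
    have e2 : ⟪LinearMap.adjoint (br Z) W, X⟫ = 0 := by
      rw [real_inner_comm, LinearMap.adjoint_inner_right, hbrX]
      simp
    have e3 : ⟪LinearMap.adjoint (br W) Z, X⟫ = 0 := by
      rw [real_inner_comm, LinearMap.adjoint_inner_right, hbrX]
      simp
    rw [inner_smul_left, inner_sub_left, inner_sub_left, e1, e2, e3]
    simp [leviCivita]
  have hnn : 0 ≤ ricci br X X := by
    rw [ricci]
    apply Finset.sum_nonneg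
    intro i _
    rw [key]
    positivity
  linarith


end
end

section
/- Let θ ∈ Hom(u, gl(n)) satisfy Σ_i [θ(Y_i), θ(Y_i)^t] = 0 for an orthonormal basis {Y_i} of u, and suppose for every Z in a subspace z of u the operator θ(Z) is normal and θ(Z)^t commutes with θ(u). Write Y_i = A_i + Z_i with A_i ∈ z^⊥-component in a complement and Z_i ∈ z, where θ(Z_i)^t commutes with all θ(Y). Then Σ_i [θ(A_i), θ(A_i)^t] = 0. -/
/-- Let `θ ∈ Hom(𝔲, 𝔤𝔩(𝔫))` satisfy the minimality condition `Σᵢ [θ(Yᵢ), θ(Yᵢ)ᵗ] = 0` for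
an orthonormal basis `{Yᵢ}` of `𝔲`, and suppose that for every `Z` in a subspace `𝔷` of
`𝔲` the operator `θ(Z)` is normal and `θ(Z)ᵗ` commutes with all of `θ(𝔲)`.  Writing
`Yᵢ = Aᵢ + Zᵢ` with `Aᵢ` in a complement `𝔴` of `𝔷` and `Zᵢ ∈ 𝔷`, one has
`Σᵢ [θ(Aᵢ), θ(Aᵢ)ᵗ] = 0`. -/
theorem minimality_descends_to_complement
    {𝔫 𝔲 : Type*} [NormedAddCommGroup 𝔫] [InnerProductSpace ℝ 𝔫] [FiniteDimensional ℝ 𝔫]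
    [NormedAddCommGroup 𝔲] [InnerProductSpace ℝ 𝔲] [FiniteDimensional ℝ 𝔲]
    {k : ℕ} (Y : OrthonormalBasis (Fin k) ℝ 𝔲)
    (θ : 𝔲 →ₗ[ℝ] (𝔫 →ₗ[ℝ] 𝔫))
    (𝔴 𝔷 : Submodule ℝ 𝔲) (hcompl : IsCompl 𝔴 𝔷)
    (A Z : Fin k → 𝔲) (hA : ∀ i, A i ∈ 𝔴) (hZ : ∀ i, Z i ∈ 𝔷)
    (hdecomp : ∀ i, Y i = A i + Z i)
    (hmin : ∑ i, (θ (Y i) * LinearMap.adjoint (θ (Y i))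
        - LinearMap.adjoint (θ (Y i)) * θ (Y i)) = 0)
    (hnormal : ∀ z ∈ 𝔷, Commute (θ z) (LinearMap.adjoint (θ z)))
    (hcomm : ∀ z ∈ 𝔷, ∀ y : 𝔲, Commute (LinearMap.adjoint (θ z)) (θ y)) :
    ∑ i, (θ (A i) * LinearMap.adjoint (θ (A i))
        - LinearMap.adjoint (θ (A i)) * θ (A i)) = 0 := by
  have key : ∀ i, θ (Y i) * LinearMap.adjoint (θ (Y i))
      - LinearMap.adjoint (θ (Y i)) * θ (Y i)
      = θ (A i) * LinearMap.adjoint (θ (A i)) - LinearMap.adjoint (θ (A i)) * θ (A i) := by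
    intro i
    set a := θ (A i) with ha
    set z := θ (Z i) with hz
    have h1 : LinearMap.adjoint z * a = a * LinearMap.adjoint z := hcomm _ (hZ i) (A i)
    have h2 : z * LinearMap.adjoint z = LinearMap.adjoint z * z := hnormal _ (hZ i)
    have h3 : LinearMap.adjoint a * z = z * LinearMap.adjoint a := by
      have := congrArg LinearMap.adjoint h1
      simpa [LinearMap.adjoint_comp, Module.End.mul_eq_comp] using this
    rw [hdecomp i, map_add, map_add]
    show (a + z) * (LinearMap.adjoint a + LinearMap.adjoint z)
        - (LinearMap.adjoint a + LinearMap.adjoint z) * (a + z) = _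
    simp only [mul_add, add_mul]
    rw [h1, h2, h3]
    abel
  calc ∑ i, (θ (A i) * LinearMap.adjoint (θ (A i))
        - LinearMap.adjoint (θ (A i)) * θ (A i))
      = ∑ i, (θ (Y i) * LinearMap.adjoint (θ (Y i))
        - LinearMap.adjoint (θ (Y i)) * θ (Y i)) := by
        exact Finset.sum_congr rfl fun i _ => (key i).symm
    _ = 0 := hmin
end

section
/- Let θ₁ ∈ Hom(u, gl(n)) where u = g_c ⊕ g_nc is an orthogonal direct sum, θ₁(g_c) consists of skew-symmetric endomorphisms, θ₁(u) is contained in a Lie subalgebra h of gl(n) closed under transpose, and [θ₁(g_c), θ₁(g_nc)] = 0. Then for any h ∈ H = Z_{GL(n)}(θ₁(g_c)), the moment map value m(h·θ₁) = Σ_i [(h·θ₁)(Y_i), ((h·θ₁)(Y_i))^t] lies in the centralizer of θ₁(g_c) in gl(n). -/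
open scoped RealInnerProductSpace

lemma sum_bilin_swap_aux {𝔲 E : Type*} [NormedAddCommGroup 𝔲] [InnerProductSpace ℝ 𝔲]
    [AddCommGroup E] [Module ℝ E] {k : ℕ} (Y : OrthonormalBasis (Fin k) ℝ 𝔲)
    (G : 𝔲 →ₗ[ℝ] 𝔲 →ₗ[ℝ] E) (q : 𝔲 →ₗ[ℝ] 𝔲)
    (hq : ∀ u v : 𝔲, ⟪q u, v⟫ = ⟪u, q v⟫) :
    ∑ i, G (Y i) (q (Y i)) = ∑ i, G (q (Y i)) (Y i) := by
  calc ∑ i, G (Y i) (q (Y i))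
      = ∑ i, ∑ j, ⟪Y j, q (Y i)⟫ • G (Y i) (Y j) := by
        refine Finset.sum_congr rfl fun i _ => ?_
        conv_lhs => rw [← Y.sum_repr' (q (Y i))]
        simp [map_sum, map_smul]
    _ = ∑ i, ∑ j, ⟪Y i, q (Y j)⟫ • G (Y i) (Y j) := by
        refine Finset.sum_congr rfl fun i _ => Finset.sum_congr rfl fun j _ => ?_
        rw [← hq, real_inner_comm]
    _ = ∑ j, ∑ i, ⟪Y i, q (Y j)⟫ • G (Y i) (Y j) := Finset.sum_comm
    _ = ∑ j, G (q (Y j)) (Y j) := by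
        refine Finset.sum_congr rfl fun j _ => ?_
        conv_rhs => rw [← Y.sum_repr' (q (Y j))]
        simp [map_sum, map_smul]


/-- Let `θ₁ ∈ Hom(𝔲, 𝔤𝔩(𝔫))` where `𝔲 = 𝔤_c ⊕ 𝔤_nc` is an orthogonal direct sum,
`θ₁(𝔤_c)` consists of skew-symmetric endomorphisms, `θ₁(𝔲)` is contained in a Lie
subalgebra `𝔥` of `𝔤𝔩(𝔫)` closed under transpose, and `[θ₁(𝔤_c), θ₁(𝔤_nc)] = 0`.  Then
for any `h ∈ H = Z_{GL(𝔫)}(θ₁(𝔤_c))`, the moment map value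
`m(h·θ₁) = Σᵢ [(h·θ₁)(Yᵢ), ((h·θ₁)(Yᵢ))ᵗ]` (where `{Yᵢ}` is an orthonormal basis of `𝔲`,
`Yᵢ = Aᵢ + Bᵢ` with `Aᵢ ∈ 𝔤_c`, `Bᵢ ∈ 𝔤_nc`, and `(h·θ₁)(Y) = h θ₁(Y) h⁻¹`) lies in the
centralizer of `θ₁(𝔤_c)` in `𝔤𝔩(𝔫)`. -/
theorem moment_map_of_flow_in_centralizer
    {𝔫 𝔲 : Type*} [NormedAddCommGroup 𝔫] [InnerProductSpace ℝ 𝔫] [FiniteDimensional ℝ 𝔫]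
    [NormedAddCommGroup 𝔲] [InnerProductSpace ℝ 𝔲] [FiniteDimensional ℝ 𝔲]
    (gc gnc : Submodule ℝ 𝔲) (hcompl : IsCompl gc gnc)
    (horth : ∀ x ∈ gc, ∀ y ∈ gnc, ⟪x, y⟫ = 0)
    {k : ℕ} (Y : OrthonormalBasis (Fin k) ℝ 𝔲) (A B : Fin k → 𝔲)
    (hA : ∀ i, A i ∈ gc) (hB : ∀ i, B i ∈ gnc) (hdec : ∀ i, Y i = A i + B i)
    (θ₁ : 𝔲 →ₗ[ℝ] (𝔫 →ₗ[ℝ] 𝔫))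
    (hskew : ∀ x ∈ gc, LinearMap.adjoint (θ₁ x) = -θ₁ x)
    (𝔥 : Submodule ℝ (𝔫 →ₗ[ℝ] 𝔫))
    (h𝔥lie : ∀ a ∈ 𝔥, ∀ b ∈ 𝔥, a * b - b * a ∈ 𝔥)
    (h𝔥adj : ∀ a ∈ 𝔥, LinearMap.adjoint a ∈ 𝔥)
    (hrange : ∀ x : 𝔲, θ₁ x ∈ 𝔥)
    (hzero : ∀ x ∈ gc, ∀ y ∈ gnc, Commute (θ₁ x) (θ₁ y))
    (h : 𝔫 ≃ₗ[ℝ] 𝔫) (hH : ∀ x ∈ gc, Commute (h : 𝔫 →ₗ[ℝ] 𝔫) (θ₁ x)) :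
    ∀ x ∈ gc,
      Commute
        (∑ i, ((h : 𝔫 →ₗ[ℝ] 𝔫) * θ₁ (Y i) * (h.symm : 𝔫 →ₗ[ℝ] 𝔫)
              * LinearMap.adjoint ((h : 𝔫 →ₗ[ℝ] 𝔫) * θ₁ (Y i) * (h.symm : 𝔫 →ₗ[ℝ] 𝔫))
            - LinearMap.adjoint ((h : 𝔫 →ₗ[ℝ] 𝔫) * θ₁ (Y i) * (h.symm : 𝔫 →ₗ[ℝ] 𝔫))
              * ((h : 𝔫 →ₗ[ℝ] 𝔫) * θ₁ (Y i) * (h.symm : 𝔫 →ₗ[ℝ] 𝔫))))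
        (θ₁ x) := by
  intro x hx
  classical
  set He : 𝔫 →ₗ[ℝ] 𝔫 := (h : 𝔫 →ₗ[ℝ] 𝔫) with hHe
  set Hi : 𝔫 →ₗ[ℝ] 𝔫 := (h.symm : 𝔫 →ₗ[ℝ] 𝔫) with hHi
  have hHeHi : He * Hi = 1 := by
    ext v; simp [hHe, hHi, Module.End.mul_apply]
  have hHiHe : Hi * He = 1 := by
    ext v; simp [hHe, hHi, Module.End.mul_apply]
  set X := θ₁ x with hX
  have hXadj : LinearMap.adjoint X = -X := hskew x hx
  have cXHe : Commute X He := (hH x hx).symm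
  have cXHi : Commute X Hi := by
    have hpt : ∀ w, He (X w) = X (He w) := fun w => by
      simpa [Module.End.mul_apply] using LinearMap.congr_fun (hH x hx).eq w
    show X * Hi = Hi * X
    ext v
    simp only [Module.End.mul_apply]
    calc X (Hi v) = Hi (He (X (Hi v))) := by simp [hHe, hHi]
      _ = Hi (X (He (Hi v))) := by rw [hpt (Hi v)]
      _ = Hi (X v) := by simp [hHe, hHi]
  -- the projection onto gc along gnc
  set π : 𝔲 →ₗ[ℝ] 𝔲 := gc.subtype ∘ₗ (gc.projectionOnto gnc hcompl) with hπ
  have hπmem : ∀ u : 𝔲, π u ∈ gc := fun u => (gc.projectionOnto gnc hcompl u).2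
  have hπ_left : ∀ u : 𝔲, u ∈ gc → π u = u := fun u hu => by
    have h1 := Submodule.projectionOnto_apply_left hcompl (⟨u, hu⟩ : gc)
    simp only [hπ, LinearMap.comp_apply, Submodule.coe_subtype]
    rw [h1]
  have hπ_right : ∀ u : 𝔲, u ∈ gnc → π u = 0 := fun u hu => by
    have h1 := Submodule.projectionOnto_apply_right hcompl (⟨u, hu⟩ : gnc)
    simp only [hπ, LinearMap.comp_apply, Submodule.coe_subtype]
    rw [h1]; rfl
  have hπY : ∀ i, π (Y i) = A i := fun i => by
    rw [hdec i, map_add, hπ_left _ (hA i), hπ_right _ (hB i), add_zero]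
  set q : 𝔲 →ₗ[ℝ] 𝔲 := LinearMap.id - π with hq
  have hqY : ∀ i, q (Y i) = B i := fun i => by
    rw [hq, LinearMap.sub_apply, LinearMap.id_apply, hπY i, hdec i, add_sub_cancel_left]
  have hπq : ∀ u : 𝔲, π (q u) = 0 := fun u => by
    simp only [hq, LinearMap.sub_apply, LinearMap.id_apply, map_sub,
      hπ_left _ (hπmem u), sub_self]
  have hdecomp : ∀ u : 𝔲, u - π u ∈ gnc := by
    intro u
    have hu : u ∈ gc ⊔ gnc := by rw [hcompl.sup_eq_top]; trivial
    obtain ⟨a, ha, b, hb, hab⟩ := Submodule.mem_sup.mp hu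
    have : π u = a := by rw [← hab, map_add, hπ_left _ ha, hπ_right _ hb, add_zero]
    rw [this, ← hab, add_sub_cancel_left]
    exact hb
  have hπadj : ∀ u v : 𝔲, ⟪π u, v⟫ = ⟪u, π v⟫ := by
    intro u v
    have h1 : ⟪π u, v - π v⟫ = 0 := horth _ (hπmem u) _ (hdecomp v)
    have h2 : ⟪u - π u, π v⟫ = 0 := by
      rw [real_inner_comm]; exact horth _ (hπmem v) _ (hdecomp u)
    have e1 : ⟪π u, v⟫ - ⟪π u, π v⟫ = 0 := by rw [← inner_sub_right]; exact h1
    have e2 : ⟪u, π v⟫ - ⟪π u, π v⟫ = 0 := by rw [← inner_sub_left]; exact h2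
    linarith
  have hqadj : ∀ u v : 𝔲, ⟪q u, v⟫ = ⟪u, q v⟫ := fun u v => by
    simp only [hq, LinearMap.sub_apply, LinearMap.id_apply, inner_sub_left, inner_sub_right,
      hπadj u v]
  -- pieces
  set P : Fin k → (𝔫 →ₗ[ℝ] 𝔫) := fun i => θ₁ (A i) with hP
  set C : Fin k → (𝔫 →ₗ[ℝ] 𝔫) := fun i => He * θ₁ (B i) * Hi with hC
  have hPadj : ∀ i, LinearMap.adjoint (P i) = -P i := fun i => hskew _ (hA i)
  have hT : ∀ i, He * θ₁ (Y i) * Hi = P i + C i := fun i => by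
    rw [hdec i, map_add, mul_add, add_mul]
    congr 1
    rw [(hH (A i) (hA i)).eq, mul_assoc, hHeHi, mul_one]
  have cXC : ∀ i, Commute X (C i) :=
    fun i => (cXHe.mul_right (hzero x hx (B i) (hB i))).mul_right cXHi
  have cXCadj : ∀ i, Commute X (LinearMap.adjoint (C i)) := fun i => by
    have h1 : Commute (star X) (star (C i)) := (cXC i).star_star
    rw [LinearMap.star_eq_adjoint, LinearMap.star_eq_adjoint, hXadj] at h1
    exact Commute.neg_left_iff.mp h1
  -- the bilinear cross-term map
  set D : 𝔲 →ₗ[ℝ] (𝔫 →ₗ[ℝ] 𝔫) :=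
    { toFun := fun v => He * θ₁ v * Hi + LinearMap.adjoint (He * θ₁ v * Hi)
      map_add' := fun u v => by
        simp only [map_add, mul_add, add_mul]
        abel
      map_smul' := fun c v => by
        simp only [map_smul, mul_smul_comm, smul_mul_assoc, RingHom.id_apply, smul_add] } with hD
  set G : 𝔲 →ₗ[ℝ] 𝔲 →ₗ[ℝ] (𝔫 →ₗ[ℝ] 𝔫) :=
    LinearMap.mk₂ ℝ (fun u v => θ₁ (π u) * D v - D v * θ₁ (π u))
      (fun m m' n => by simp only [map_add, add_mul, mul_add]; abel)
      (fun c m n => by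
        simp only [map_smul, smul_mul_assoc, mul_smul_comm, smul_sub])
      (fun m n n' => by simp only [map_add, add_mul, mul_add]; abel)
      (fun c m n => by
        simp only [map_smul, smul_mul_assoc, mul_smul_comm, smul_sub]) with hG
  have hGval : ∀ i, G (Y i) (q (Y i))
      = P i * (C i + LinearMap.adjoint (C i)) - (C i + LinearMap.adjoint (C i)) * P i := by
    intro i
    simp only [hG, LinearMap.mk₂_apply, hπY i, hqY i, hD, LinearMap.coe_mk, AddHom.coe_mk,
      hP, hC]
  have hcross : (∑ i, (P i * (C i + LinearMap.adjoint (C i))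
      - (C i + LinearMap.adjoint (C i)) * P i)) = 0 := by
    rw [show (∑ i, (P i * (C i + LinearMap.adjoint (C i))
        - (C i + LinearMap.adjoint (C i)) * P i)) = ∑ i, G (Y i) (q (Y i)) from
      Finset.sum_congr rfl fun i _ => (hGval i).symm]
    rw [sum_bilin_swap_aux Y G q hqadj]
    refine Finset.sum_eq_zero fun i _ => ?_
    simp only [hG, LinearMap.mk₂_apply, hπq, map_zero, zero_mul, mul_zero, sub_zero]
  -- term-by-term identity
  have hterm : ∀ i, (He * θ₁ (Y i) * Hi) * LinearMap.adjoint (He * θ₁ (Y i) * Hi)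
        - LinearMap.adjoint (He * θ₁ (Y i) * Hi) * (He * θ₁ (Y i) * Hi)
      = (P i * (C i + LinearMap.adjoint (C i)) - (C i + LinearMap.adjoint (C i)) * P i)
        + (C i * LinearMap.adjoint (C i) - LinearMap.adjoint (C i) * C i) := fun i => by
    rw [hT i, map_add, hPadj i]
    noncomm_ring
  rw [show (∑ i, ((He * θ₁ (Y i) * Hi)
          * LinearMap.adjoint (He * θ₁ (Y i) * Hi)
        - LinearMap.adjoint (He * θ₁ (Y i) * Hi)
          * (He * θ₁ (Y i) * Hi)))
      = (∑ i, (P i * (C i + LinearMap.adjoint (C i)) - (C i + LinearMap.adjoint (C i)) * P i))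
        + ∑ i, (C i * LinearMap.adjoint (C i) - LinearMap.adjoint (C i) * C i) from by
    rw [← Finset.sum_add_distrib]
    exact Finset.sum_congr rfl fun i _ => hterm i]
  rw [hcross, zero_add]
  exact Commute.sum_left _ _ _ fun i _ =>
    ((cXC i).symm.mul_left (cXCadj i).symm).sub_left ((cXCadj i).symm.mul_left (cXC i).symm)
end

section
/- Let g be a 3-dimensional Lie algebra with orthonormal basis {e₁,e₂,e₃} satisfying [e₂,e₃]=λ₁e₁, [e₃,e₁]=λ₂e₂, [e₁,e₂]=λ₃e₃ with λ₁ < 0 < λ₂ ≤ λ₃. Define μ_i = (1/2)(−λ_i + λ_{i+1} + λ_{i+2}) (indices mod 3) and ric(e_i) = 2 μ_{i+1} μ_{i+2}. Then ric(e₁) is not strictly smaller than both ric(e₂) and ric(e₃); i.e., the minimum of the three Ricci eigenvalues is attained at e₂ or e₃. -/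
/-- **Milnor's Ricci formulas for `SL(2,ℝ)`.** Let `𝔤` be a 3-dimensional Lie algebra
(with bracket `br`) with orthonormal basis `{e₁,e₂,e₃}` satisfying `[e₂,e₃] = λ₁e₁`,
`[e₃,e₁] = λ₂e₂`, `[e₁,e₂] = λ₃e₃` with `λ₁ < 0 < λ₂ ≤ λ₃`.  Define
`μᵢ = ½(−λᵢ + λᵢ₊₁ + λᵢ₊₂)` (indices mod 3) and the principal Ricci curvatures
`ric(eᵢ) = 2 μᵢ₊₁ μᵢ₊₂`.  Then `ric(e₁)` is not strictly smaller than both `ric(e₂)` and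
`ric(e₃)`; i.e. the minimum of the three Ricci eigenvalues is attained at `e₂` or `e₃`. -/
theorem ricci_min_not_at_e1
    {L : Type*} [NormedAddCommGroup L] [InnerProductSpace ℝ L] [FiniteDimensional ℝ L]
    (br : L →ₗ[ℝ] L →ₗ[ℝ] L)
    (hanti : ∀ X Y : L, br X Y = - br Y X)
    (hjacobi : ∀ X Y Z : L, br X (br Y Z) + br Y (br Z X) + br Z (br X Y) = 0)
    (e : OrthonormalBasis (Fin 3) ℝ L) (lam : Fin 3 → ℝ)
    (h1 : lam 0 < 0) (h2 : 0 < lam 1) (h3 : lam 1 ≤ lam 2)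
    (hbr1 : br (e 1) (e 2) = lam 0 • e 0)
    (hbr2 : br (e 2) (e 0) = lam 1 • e 1)
    (hbr3 : br (e 0) (e 1) = lam 2 • e 2)
    (mu : Fin 3 → ℝ)
    (hmu : ∀ i : Fin 3, mu i = (1 / 2 : ℝ) * (-lam i + lam (i + 1) + lam (i + 2)))
    (ric : Fin 3 → ℝ)
    (hric : ∀ i : Fin 3, ric i = 2 * mu (i + 1) * mu (i + 2)) :
    ¬ (ric 0 < ric 1 ∧ ric 0 < ric 2) := by
  rintro ⟨ha, hb⟩
  have m0 := hmu 0; have m1 := hmu 1; have m2 := hmu 2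
  have r0 := hric 0; have r1 := hric 1; have r2 := hric 2
  norm_num [show (0:Fin 3)+1 = 1 from rfl, show (0:Fin 3)+2 = 2 from rfl,
    show (1:Fin 3)+1 = 2 from rfl, show (1:Fin 3)+2 = 0 from rfl,
    show (2:Fin 3)+1 = 0 from rfl, show (2:Fin 3)+2 = 1 from rfl,
    show (3:Fin 3) = 0 from rfl, show (4:Fin 3) = 1 from rfl] at m0 m1 m2 r0 r1 r2
  rw [r0, r1] at ha
  rw [r0, r2] at hb
  nlinarith [mul_pos h2 h2, sq_nonneg (mu 1 + mu 2), sq_nonneg (mu 1 - mu 2)]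
end
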